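/- Let p be prime, Γ_n cyclic of order p^n with generator γ_0, and g ∈ Z_p[[T]]. The image ε_n of g in Z_p[Γ_n] (via γ_0 ↦ 1+T, mod (1+T)^(p^n)-1) is given by ε_n = Σ_{γ∈Γ_n} [ (1/p^n) Σ_{χ} g(χ(γ_0)-1) χ̄(γ) ] γ, where the inner sum is over all characters χ of Γ_n. -/

import Mathlib

open Finset PowerSeries

section eval

variable {p : ℕ} [Fact p.Prime] {K : Type*} [NontriviallyNormedField K]
  [NormedAlgebra ℚ_[p] K] [CompleteSpace K] [Algebra ℤ_[p] K] [IsScalarTower ℤ_[p] ℚ_[p] K]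

lemma myNormAlgMap (q : ℚ_[p]) : ‖algebraMap ℚ_[p] K q‖ = ‖q‖ := norm_algebraMap' K q

lemma myNormAlgMapInt (c : ℤ_[p]) : ‖algebraMap ℤ_[p] K c‖ ≤ 1 := by
  rw [IsScalarTower.algebraMap_apply ℤ_[p] ℚ_[p] K, myNormAlgMap, PadicInt.algebraMap_apply,
    PadicInt.padic_norm_e_of_padicInt]
  exact c.norm_le_one

lemma mySummable {z : K} (hz : ‖z‖ < 1) (c : ℕ → ℤ_[p]) :
    Summable fun m => ‖algebraMap ℤ_[p] K (c m) * z ^ m‖ := by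
  refine Summable.of_nonneg_of_le (fun _ => norm_nonneg _) (fun m => ?_)
    (summable_geometric_of_lt_one (norm_nonneg z) hz)
  rw [norm_mul, norm_pow]
  exact mul_le_of_le_one_left (pow_nonneg (norm_nonneg z) m) (myNormAlgMapInt _)

noncomputable def pEval {z : K} (hz : ‖z‖ < 1) : PowerSeries ℤ_[p] →+* K where
  toFun f := ∑' m, algebraMap ℤ_[p] K (PowerSeries.coeff (R := ℤ_[p]) m f) * z ^ m
  map_one' := by
    show (∑' m, algebraMap ℤ_[p] K (PowerSeries.coeff (R := ℤ_[p]) m 1) * z ^ m) = 1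
    rw [tsum_eq_single 0 (fun m hm => by simp [PowerSeries.coeff_one, hm])]
    simp
  map_zero' := by simp
  map_add' f g := by
    simp only [map_add, add_mul]
    exact Summable.tsum_add (mySummable hz _).of_norm (mySummable hz _).of_norm
  map_mul' f g := by
    rw [tsum_mul_tsum_eq_tsum_sum_antidiagonal_of_summable_norm (mySummable hz _)
      (mySummable hz _)]
    refine tsum_congr fun m => ?_
    rw [PowerSeries.coeff_mul, map_sum, Finset.sum_mul]
    refine Finset.sum_congr rfl fun kl hkl => ?_
    rw [Finset.HasAntidiagonal.mem_antidiagonal] at hkl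
    rw [map_mul, ← hkl, pow_add]
    ring

lemma pEval_C {z : K} (hz : ‖z‖ < 1) (r : ℤ_[p]) :
    pEval hz (PowerSeries.C (R := ℤ_[p]) r) = algebraMap ℤ_[p] K r := by
  show (∑' m, algebraMap ℤ_[p] K (PowerSeries.coeff (R := ℤ_[p]) m (PowerSeries.C (R := ℤ_[p]) r)) * z ^ m) = _
  rw [tsum_eq_single 0 (fun m hm => by simp [PowerSeries.coeff_C, hm])]
  simp

lemma pEval_X {z : K} (hz : ‖z‖ < 1) :
    pEval hz (PowerSeries.X : PowerSeries ℤ_[p]) = z := by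
  show (∑' m, algebraMap ℤ_[p] K (PowerSeries.coeff (R := ℤ_[p]) m PowerSeries.X) * z ^ m) = _
  rw [tsum_eq_single 1 (fun m hm => by simp [PowerSeries.coeff_X, hm])]
  simp

include p in
lemma myUltra : IsUltrametricDist K := by
  apply IsUltrametricDist.isUltrametricDist_of_forall_norm_natCast_le_one
  intro m
  have h : ((m : ℕ) : K) = algebraMap ℚ_[p] K ((m : ℤ) : ℚ_[p]) := by simp
  rw [h, myNormAlgMap]
  exact Padic.norm_int_le_one _

include p in
lemma myNormNat (m : ℕ) : ‖((m : ℕ) : K)‖ ≤ 1 := by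
  have h : ((m : ℕ) : K) = algebraMap ℚ_[p] K ((m : ℤ) : ℚ_[p]) := by simp
  rw [h, myNormAlgMap]
  exact Padic.norm_int_le_one _

lemma myNormP : ‖((p : ℕ) : K)‖ = (p : ℝ)⁻¹ := by
  have h : ((p : ℕ) : K) = algebraMap ℚ_[p] K (p : ℚ_[p]) := by rw [map_natCast]
  rw [h, myNormAlgMap, Padic.norm_p]

lemma myRootNorm (n : ℕ) (ζ : K) (hζ : ζ ^ p ^ n = 1) : ‖ζ - 1‖ < 1 := by
  have hp : p.Prime := Fact.out
  have := myUltra (p := p) (K := K)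
  by_contra hcon
  push_neg at hcon
  set x := ζ - 1 with hx
  set N := p ^ n with hN
  have hNpos : 0 < N := pow_pos hp.pos n
  have hb : (x + 1) ^ N = ∑ k ∈ range (N + 1), x ^ k * (N.choose k : K) := by
    rw [add_pow]; simp
  have hxz : x + 1 = ζ := by rw [hx]; ring
  have hsum : (1 : K) = ∑ k ∈ range (N + 1), x ^ k * (N.choose k : K) := by
    rw [← hb, hxz, hζ]
  have hsplit : ∑ k ∈ range (N + 1), x ^ k * (N.choose k : K)
      = (1 + ∑ k ∈ Ioo 0 N, x ^ k * (N.choose k : K)) + x ^ N := by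
    rw [Finset.sum_range_succ, Nat.choose_self]
    congr 1
    · rw [Finset.range_eq_Ico, ← Finset.Ioo_insert_left hNpos, Finset.sum_insert (by simp)]
      simp
    · simp
  have hxN : x ^ N = - ∑ k ∈ Ioo 0 N, x ^ k * (N.choose k : K) := by
    have := hsum
    rw [hsplit] at this
    linear_combination -this
  have hxN1 : (1 : ℝ) ≤ ‖x‖ ^ N := one_le_pow₀ hcon
  have hbound : ‖x ^ N‖ ≤ (p : ℝ)⁻¹ * ‖x‖ ^ N := by
    rw [hxN, norm_neg]
    refine IsUltrametricDist.norm_sum_le_of_forall_le_of_nonneg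
      (by positivity) (fun k hk => ?_)
    rw [Finset.mem_Ioo] at hk
    obtain ⟨t, ht⟩ := hp.dvd_choose_pow hk.1.ne' (hN ▸ hk.2.ne)
    rw [norm_mul, norm_pow]
    have h1 : ‖(N.choose k : K)‖ ≤ (p : ℝ)⁻¹ := by
      rw [ht]
      push_cast
      rw [norm_mul, myNormP]
      exact mul_le_of_le_one_right (by positivity) (myNormNat (p := p) t)
    have h2 : ‖x‖ ^ k ≤ ‖x‖ ^ N :=
      pow_le_pow_right₀ hcon hk.2.le
    calc ‖x‖ ^ k * ‖(N.choose k : K)‖ ≤ ‖x‖ ^ N * (p : ℝ)⁻¹ :=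
          mul_le_mul h2 h1 (norm_nonneg _) (by positivity)
      _ = (p : ℝ)⁻¹ * ‖x‖ ^ N := mul_comm _ _
  rw [norm_pow] at hbound
  have hplt : (p : ℝ)⁻¹ < 1 := by
    rw [inv_lt_one_iff₀]
    right; exact_mod_cast hp.one_lt
  have : ‖x‖ ^ N < ‖x‖ ^ N :=
    lt_of_le_of_lt hbound (mul_lt_of_lt_one_left (lt_of_lt_of_le one_pos hxN1) hplt)
  exact absurd this (lt_irrefl _)

end eval



/-- Let `Γ` be cyclic of order `p^n` with generator `γ₀`, `g ∈ ℤ_p[[T]]`, and let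
`ε_n` denote the image of `g` in `ℤ_p[Γ]` under `γ₀ ↦ 1+T` mod `(1+T)^(p^n) - 1`,
i.e. `ε_n = Σ_b a_b γ₀^b` where `g ≡ Σ_{b<p^n} a_b (1+T)^b mod ω_n`.  Then
`ε_n = Σ_γ [ (1/p^n) Σ_χ g(χ(γ₀)-1) χ̄(γ) ] γ`, the inner sum being over all characters
`χ` of `Γ` with values in `K` (an algebraically closed complete field over `ℚ_p`,
containing the `p^n`-th roots of unity). -/
theorem stmt_11 (p n : ℕ) [Fact p.Prime] {Γ : Type*} [CommGroup Γ] [Fintype Γ]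
    (γ0 : Γ) (hord : orderOf γ0 = p ^ n) (hgen : ∀ g : Γ, g ∈ Subgroup.zpowers γ0)
    {K : Type*} [NontriviallyNormedField K] [NormedAlgebra ℚ_[p] K] [CompleteSpace K]
    [Algebra ℤ_[p] K] [IsScalarTower ℤ_[p] ℚ_[p] K]
    (hroots : ∃ ξ : K, IsPrimitiveRoot ξ (p ^ n))
    (g : PowerSeries ℤ_[p]) (a : ℕ → ℤ_[p]) (Q : PowerSeries ℤ_[p])
    (hg : g = (∑ b ∈ Finset.range (p ^ n),
          PowerSeries.C (R := ℤ_[p]) (a b) * (1 + PowerSeries.X) ^ b)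
        + ((1 + PowerSeries.X) ^ (p ^ n) - 1) * Q) :
    (∑ b ∈ Finset.range (p ^ n),
        algebraMap ℤ_[p] K (a b) • MonoidAlgebra.of K Γ (γ0 ^ b))
      = ∑ γ : Γ,
          ((p ^ n : K)⁻¹ *
            ∑ᶠ χ : Γ →* Kˣ,
              (∑' m : ℕ,
                algebraMap ℤ_[p] K (PowerSeries.coeff (R := ℤ_[p]) m g) * ((χ γ0 : K) - 1) ^ m) *
                ((χ γ : K))⁻¹) • MonoidAlgebra.of K Γ γ := by
  classical
  have hp : p.Prime := Fact.out
  haveI : IsCyclic Γ := ⟨⟨γ0, hgen⟩⟩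
  have h1 : γ0 ^ p ^ n = 1 := by rw [← hord]; exact pow_orderOf_eq_one γ0
  have hcard : Fintype.card Γ = p ^ n := by
    rw [← Nat.card_eq_fintype_card, ← hord]
    exact (orderOf_eq_card_of_forall_mem_zpowers hgen).symm
  haveI : NeZero (p ^ n) := ⟨(pow_pos hp.pos n).ne'⟩
  haveI hK : HasEnoughRootsOfUnity K (p ^ n) := ⟨hroots, inferInstance⟩
  have hexp : Monoid.exponent Γ ∣ p ^ n := hcard ▸ Group.exponent_dvd_card
  haveI : HasEnoughRootsOfUnity K (Monoid.exponent Γ) := HasEnoughRootsOfUnity.of_dvd K hexp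
  obtain ⟨e⟩ := CommGroup.monoidHom_mulEquiv_of_hasEnoughRootsOfUnity Γ K
  haveI : Finite (Γ →* Kˣ) := Finite.of_equiv Γ e.toEquiv.symm
  letI : Fintype (Γ →* Kˣ) := Fintype.ofFinite _
  have hcardχ : Fintype.card (Γ →* Kˣ) = p ^ n := by
    rw [← hcard]; exact Fintype.card_congr e.toEquiv
  haveI : CharZero K := charZero_of_injective_algebraMap (algebraMap ℚ_[p] K).injective
  have hpn0 : (p ^ n : K) ≠ 0 := by
    have : ((p ^ n : ℕ) : K) ≠ 0 := Nat.cast_ne_zero.mpr (pow_pos hp.pos n).ne'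
    push_cast at this ⊢
    exact this
  have orth : ∀ x : Γ, ∑ χ : Γ →* Kˣ, ((χ x : K)) = if x = 1 then (p ^ n : K) else 0 := by
    intro x
    by_cases hx : x = 1
    · subst hx
      rw [if_pos rfl]
      have h2 : ∀ χ : Γ →* Kˣ, ((χ (1 : Γ) : K)) = 1 := fun χ => by
        rw [map_one, Units.val_one]
      rw [Finset.sum_congr rfl fun χ _ => h2 χ, Finset.sum_const, Finset.card_univ, hcardχ,
        nsmul_eq_mul, mul_one]
      push_cast
      ring
    · rw [if_neg hx]
      obtain ⟨ψ, hψ⟩ := CommGroup.exists_apply_ne_one_of_hasEnoughRootsOfUnity Γ K hx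
      refine eq_zero_of_mul_eq_self_left (b := (ψ x : K))
        (fun hcon => hψ (Units.val_eq_one.mp hcon)) ?_
      rw [Finset.mul_sum]
      exact Fintype.sum_bijective _ (Group.mulLeft_bijective ψ) _ _ fun χ => by
        simp [Units.val_mul]
  have hzlt : ∀ χ : Γ →* Kˣ, ‖((χ γ0 : K)) - 1‖ < 1 := fun χ => by
    refine myRootNorm (p := p) n _ ?_
    rw [← Units.val_pow_eq_pow_val, ← map_pow, h1, map_one, Units.val_one]
  have hEg : ∀ χ : Γ →* Kˣ,
      (∑' m : ℕ, algebraMap ℤ_[p] K (PowerSeries.coeff (R := ℤ_[p]) m g) * ((χ γ0 : K) - 1) ^ m)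
        = ∑ b ∈ Finset.range (p ^ n),
            algebraMap ℤ_[p] K (a b) * ((χ γ0 : K)) ^ b := by
    intro χ
    have hu : 1 + ((χ γ0 : K) - 1) = (χ γ0 : K) := by ring
    have hupow : ((χ γ0 : K)) ^ p ^ n = 1 := by
      rw [← Units.val_pow_eq_pow_val, ← map_pow, h1, map_one, Units.val_one]
    have hω : pEval (hzlt χ) ((1 + PowerSeries.X) ^ (p ^ n) - 1 : PowerSeries ℤ_[p]) = 0 := by
      rw [map_sub, map_pow, map_add, map_one, pEval_X, hu, hupow, sub_self]
    have hF : pEval (hzlt χ) (∑ b ∈ Finset.range (p ^ n),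
        PowerSeries.C (R := ℤ_[p]) (a b) * (1 + PowerSeries.X) ^ b)
        = ∑ b ∈ Finset.range (p ^ n), algebraMap ℤ_[p] K (a b) * ((χ γ0 : K)) ^ b := by
      rw [map_sum]
      exact Finset.sum_congr rfl fun b _ => by
        rw [map_mul, pEval_C, map_pow, map_add, map_one, pEval_X, hu]
    show pEval (hzlt χ) g = _
    rw [hg, map_add, map_mul, hω, zero_mul, add_zero, hF]
  have key : ∀ γ : Γ,
      ((p ^ n : K)⁻¹ *
          ∑ᶠ χ : Γ →* Kˣ,
            (∑' m : ℕ,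
              algebraMap ℤ_[p] K (PowerSeries.coeff (R := ℤ_[p]) m g) * ((χ γ0 : K) - 1) ^ m) *
              ((χ γ : K))⁻¹)
        = ∑ b ∈ Finset.range (p ^ n),
            (if γ0 ^ b = γ then algebraMap ℤ_[p] K (a b) else 0) := by
    intro γ
    rw [finsum_eq_sum_of_fintype]
    have step1 : ∀ χ : Γ →* Kˣ,
        (∑' m : ℕ,
              algebraMap ℤ_[p] K (PowerSeries.coeff (R := ℤ_[p]) m g) * ((χ γ0 : K) - 1) ^ m) *
            ((χ γ : K))⁻¹
          = ∑ b ∈ Finset.range (p ^ n),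
              algebraMap ℤ_[p] K (a b) * ((χ (γ0 ^ b * γ⁻¹) : K)) := by
      intro χ
      rw [hEg χ, Finset.sum_mul]
      refine Finset.sum_congr rfl fun b _ => ?_
      rw [map_mul, map_pow, map_inv, Units.val_mul, Units.val_pow_eq_pow_val,
        Units.val_inv_eq_inv_val]
      ring
    rw [Finset.sum_congr rfl fun χ _ => step1 χ, Finset.sum_comm, Finset.mul_sum]
    refine Finset.sum_congr rfl fun b _ => ?_
    rw [← Finset.mul_sum, orth, mul_inv_eq_one]
    split_ifs with h
    · rw [mul_comm (algebraMap ℤ_[p] K (a b)) _, ← mul_assoc, inv_mul_cancel₀ hpn0, one_mul]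
    · rw [mul_zero, mul_zero]
  have step2 : (∑ γ : Γ,
      ((p ^ n : K)⁻¹ *
        ∑ᶠ χ : Γ →* Kˣ,
          (∑' m : ℕ,
            algebraMap ℤ_[p] K (PowerSeries.coeff (R := ℤ_[p]) m g) * ((χ γ0 : K) - 1) ^ m) *
            ((χ γ : K))⁻¹) • MonoidAlgebra.of K Γ γ)
      = ∑ γ : Γ, (∑ b ∈ Finset.range (p ^ n),
          (if γ0 ^ b = γ then algebraMap ℤ_[p] K (a b) else 0)) • MonoidAlgebra.of K Γ γ :=
    Finset.sum_congr rfl fun γ _ => by rw [key γ]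
  rw [step2]
  simp only [Finset.sum_smul]
  rw [Finset.sum_comm]
  refine Finset.sum_congr rfl fun b _ => ?_
  simp only [ite_smul, zero_smul]
  rw [Finset.sum_ite_eq, if_pos (Finset.mem_univ _)]
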